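/- Let (X_α) be an inverse system of nonempty compact Hausdorff topological spaces indexed by a directed partially ordered set, with continuous bonding maps f_{αβ} : X_β → X_α for α ≤ β satisfying f_{αβ} ∘ f_{βγ} = f_{αγ} whenever α ≤ β ≤ γ. Suppose each bonding map is monotone, i.e., surjective with every point preimage compact and connected, and suppose each factor space X_α is locally connected. Then the inverse limit lim← X_α (the subspace of the product Π X_α consisting of compatible threads) is locally connected. -/

import Mathlib

/-- Capel's theorem: the inverse limit of an inverse system of nonempty compact
Hausdorff locally connected spaces over a directed partially ordered set, with
monotone (surjective with compact connected point preimages) continuous bonding maps,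
is locally connected. -/
theorem inverseLimit_locallyConnected {ι : Type*} [PartialOrder ι]
    [IsDirected ι (· ≤ ·)]
    (X : ι → Type*) [∀ i, TopologicalSpace (X i)] [∀ i, CompactSpace (X i)]
    [∀ i, T2Space (X i)] [∀ i, Nonempty (X i)] [∀ i, LocallyConnectedSpace (X i)]
    (f : ∀ i j, i ≤ j → X j → X i)
    (hcont : ∀ i j (h : i ≤ j), Continuous (f i j h))
    (hid : ∀ i (x : X i), f i i le_rfl x = x)
    (hcomp : ∀ i j k (hij : i ≤ j) (hjk : j ≤ k) (x : X k),
      f i j hij (f j k hjk x) = f i k (hij.trans hjk) x)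
    (hsurj : ∀ i j (h : i ≤ j), Function.Surjective (f i j h))
    (hfib : ∀ i j (h : i ≤ j) (y : X i),
      IsCompact (f i j h ⁻¹' {y}) ∧ IsConnected (f i j h ⁻¹' {y})) :
    LocallyConnectedSpace
      {x : ∀ i, X i // ∀ i j (h : i ≤ j), f i j h (x j) = x i} := by
  classical
  set S : Set (∀ i, X i) := {x | ∀ i j (h : i ≤ j), f i j h (x j) = x i} with hSdef
  show LocallyConnectedSpace ↥S
  -- S is closed in the product
  have hScl : IsClosed S := by
    have : S = ⋂ (i) (j) (h : i ≤ j), {x : ∀ i, X i | f i j h (x j) = x i} := by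
      ext x; simp [hSdef, Set.mem_iInter]
    rw [this]
    refine isClosed_iInter fun i => isClosed_iInter fun j => isClosed_iInter fun h => ?_
    exact isClosed_eq ((hcont i j h).comp (continuous_apply j)) (continuous_apply i)
  haveI : CompactSpace ↥S := isCompact_iff_compactSpace.mp hScl.isCompact
  -- the projections
  set π : ∀ i, ↥S → X i := fun i y => y.1 i with hπdef
  have hπc : ∀ i, Continuous (π i) := fun i =>
    (continuous_apply i).comp continuous_subtype_val
  -- Step 1: every point in every factor is hit by a thread.
  have hthread : ∀ (j : ι) (z : X j), ∃ y : ↥S, y.1 j = z := by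
    intro j z
    haveI : Nonempty {l : ι // j ≤ l} := ⟨⟨j, le_rfl⟩⟩
    set M : {l : ι // j ≤ l} → Set (∀ i, X i) := fun l =>
      {y | (∀ k (h : k ≤ l.1), f k l.1 h (y l.1) = y k) ∧ f j l.1 l.2 (y l.1) = z}
      with hMdef
    have hMcl : ∀ l, IsClosed (M l) := by
      intro l
      have h1 : IsClosed {y : ∀ i, X i | ∀ k (h : k ≤ l.1), f k l.1 h (y l.1) = y k} := by
        have : {y : ∀ i, X i | ∀ k (h : k ≤ l.1), f k l.1 h (y l.1) = y k}
            = ⋂ (k) (h : k ≤ l.1), {y : ∀ i, X i | f k l.1 h (y l.1) = y k} := by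
          ext y; simp [Set.mem_iInter]
        rw [this]
        refine isClosed_iInter fun k => isClosed_iInter fun h => ?_
        exact isClosed_eq ((hcont k l.1 h).comp (continuous_apply l.1)) (continuous_apply k)
      exact h1.inter (isClosed_eq ((hcont j l.1 l.2).comp (continuous_apply l.1))
        continuous_const)
    have hMmono : ∀ (a b : {l : ι // j ≤ l}), a.1 ≤ b.1 → M b ⊆ M a := by
      rintro a b hab y ⟨hy1, hy2⟩
      have hya : y a.1 = f a.1 b.1 hab (y b.1) := (hy1 a.1 hab).symm
      constructor
      · intro k hk
        rw [hya, hcomp k a.1 b.1 hk hab]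
        exact hy1 k (hk.trans hab)
      · rw [hya, hcomp j a.1 b.1 a.2 hab]
        exact hy2
    have hMdir : Directed (· ⊇ ·) M := by
      intro a b
      obtain ⟨m, hm1, hm2⟩ := directed_of (· ≤ ·) a.1 b.1
      exact ⟨⟨m, a.2.trans hm1⟩, hMmono a ⟨m, a.2.trans hm1⟩ hm1, hMmono b ⟨m, _⟩ hm2⟩
    have hMne : ∀ l, (M l).Nonempty := by
      intro l
      obtain ⟨w, hw⟩ := hsurj j l.1 l.2 z
      refine ⟨fun k => if h : k ≤ l.1 then f k l.1 h w else Classical.arbitrary _, ?_, ?_⟩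
      · intro k h
        simp only [dif_pos h, dif_pos (le_refl l.1), hid]
      · simp only [dif_pos (le_refl l.1), hid]
        exact hw
    obtain ⟨y, hy⟩ := IsCompact.nonempty_iInter_of_directed_nonempty_isCompact_isClosed
      M hMdir hMne (fun l => (hMcl l).isCompact) hMcl
    simp only [Set.mem_iInter] at hy
    have hyS : y ∈ S := by
      intro k k' hkk'
      obtain ⟨m, hm1, hm2⟩ := directed_of (· ≤ ·) k' j
      obtain ⟨hy1, -⟩ := hy ⟨m, hm2⟩
      rw [← hy1 k' hm1, hcomp k k' m hkk' hm1]
      exact hy1 k (hkk'.trans hm1)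
    refine ⟨⟨y, hyS⟩, ?_⟩
    obtain ⟨-, hy2⟩ := hy ⟨j, le_rfl⟩
    rw [← hy2, hid]
  -- threads agree globally if they agree cofinally
  have hext : ∀ (a b : ↥S) (i : ι), (∀ l : {l : ι // i ≤ l}, a.1 l.1 = b.1 l.1) → a = b := by
    intro a b i hab
    refine Subtype.ext (funext fun k => ?_)
    obtain ⟨m, hm1, hm2⟩ := directed_of (· ≤ ·) k i
    rw [← a.2 k m hm1, ← b.2 k m hm1, hab ⟨m, hm2⟩]
  -- Step 2: fibers of the projections are preconnected.
  have hfibL : ∀ (i : ι) (x : X i), IsPreconnected (π i ⁻¹' {x}) := by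
    intro i x
    rw [isPreconnected_closed_iff]
    intro t u ht hu hcov hnet hneu
    haveI : Nonempty {l : ι // i ≤ l} := ⟨⟨i, le_rfl⟩⟩
    set F : Set ↥S := π i ⁻¹' {x} with hFdef
    have hFcl : IsClosed F := isClosed_singleton.preimage (hπc i)
    set A : Set ↥S := F ∩ t with hAdef
    set B : Set ↥S := F ∩ u with hBdef
    have hAcl : IsClosed A := hFcl.inter ht
    have hBcl : IsClosed B := hFcl.inter hu
    set H : {l : ι // i ≤ l} → Set (↥S × ↥S) := fun l =>
      {p | p.1 ∈ A ∧ p.2 ∈ B ∧ p.1.1 l.1 = p.2.1 l.1} with hHdef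
    have hHcl : ∀ l, IsClosed (H l) := by
      intro l
      have h3 : IsClosed {p : ↥S × ↥S | p.1.1 l.1 = p.2.1 l.1} :=
        isClosed_eq (((continuous_apply l.1).comp continuous_subtype_val).comp continuous_fst)
          (((continuous_apply l.1).comp continuous_subtype_val).comp continuous_snd)
      exact (hAcl.preimage continuous_fst).inter ((hBcl.preimage continuous_snd).inter h3)
    have hHmono : ∀ (a b : {l : ι // i ≤ l}), a.1 ≤ b.1 → H b ⊆ H a := by
      rintro a b hab p ⟨hp1, hp2, hp3⟩
      refine ⟨hp1, hp2, ?_⟩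
      rw [← p.1.2 a.1 b.1 hab, ← p.2.2 a.1 b.1 hab, hp3]
    have hHdir : Directed (· ⊇ ·) H := by
      intro a b
      obtain ⟨m, hm1, hm2⟩ := directed_of (· ≤ ·) a.1 b.1
      exact ⟨⟨m, a.2.trans hm1⟩, hHmono a ⟨m, a.2.trans hm1⟩ hm1, hHmono b ⟨m, _⟩ hm2⟩
    have hHne : ∀ l, (H l).Nonempty := by
      intro l
      -- the fiber of the bonding map f i l
      have hfibc := hfib i l.1 l.2 x
      have hAim : IsClosed (π l.1 '' A) :=
        ((hAcl.isCompact).image (hπc l.1)).isClosed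
      have hBim : IsClosed (π l.1 '' B) :=
        ((hBcl.isCompact).image (hπc l.1)).isClosed
      have hsubim : ∀ y : ↥S, y ∈ F → π l.1 y ∈ f i l.1 l.2 ⁻¹' {x} := by
        intro y hy
        have : f i l.1 l.2 (y.1 l.1) = y.1 i := y.2 i l.1 l.2
        simp only [Set.mem_preimage, Set.mem_singleton_iff, this]
        exact this.trans hy
      have hcov2 : f i l.1 l.2 ⁻¹' {x} ⊆ π l.1 '' A ∪ π l.1 '' B := by
        intro z hz
        obtain ⟨y, hy⟩ := hthread l.1 z
        have hyF : y ∈ F := by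
          simp only [hFdef, Set.mem_preimage, Set.mem_singleton_iff, hπdef]
          rw [← y.2 i l.1 l.2, hy]
          exact hz
        rcases hcov hyF with hyt | hyu
        · exact Or.inl ⟨y, ⟨hyF, hyt⟩, hy⟩
        · exact Or.inr ⟨y, ⟨hyF, hyu⟩, hy⟩
      have hneA : (f i l.1 l.2 ⁻¹' {x} ∩ π l.1 '' A).Nonempty := by
        obtain ⟨a, ha⟩ := hnet
        exact ⟨π l.1 a, hsubim a ha.1, a, ha, rfl⟩
      have hneB : (f i l.1 l.2 ⁻¹' {x} ∩ π l.1 '' B).Nonempty := by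
        obtain ⟨b, hb⟩ := hneu
        exact ⟨π l.1 b, hsubim b hb.1, b, hb, rfl⟩
      obtain ⟨z, -, ⟨a, haA, hal⟩, ⟨b, hbB, hbl⟩⟩ :=
        isPreconnected_closed_iff.mp hfibc.2.2 (π l.1 '' A) (π l.1 '' B)
          hAim hBim hcov2 hneA hneB
      exact ⟨(a, b), haA, hbB, hal.trans hbl.symm⟩
    obtain ⟨⟨a, b⟩, hab⟩ := IsCompact.nonempty_iInter_of_directed_nonempty_isCompact_isClosed
      H hHdir hHne (fun l => (hHcl l).isCompact) hHcl
    simp only [Set.mem_iInter] at hab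
    have haA : a ∈ A := (hab ⟨i, le_rfl⟩).1
    have hbB : b ∈ B := (hab ⟨i, le_rfl⟩).2.1
    have : a = b := hext a b i fun l => (hab l).2.2
    exact ⟨a, haA.1, haA.2, this ▸ hbB.2⟩
  -- Step 3: preimages of open preconnected sets are preconnected.
  have hpre : ∀ (i : ι) (V : Set (X i)), IsOpen V → IsPreconnected V →
      IsPreconnected (π i ⁻¹' V) := by
    intro i V hVo hVc
    intro u₁ u₂ hu₁ hu₂ hcov hne₁ hne₂
    by_contra hempty
    rw [Set.not_nonempty_iff_eq_empty] at hempty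
    have hclosed : IsClosedMap (π i) := (hπc i).isClosedMap
    -- dichotomy for fibers over points of V
    have hdichot : ∀ v ∈ V, π i ⁻¹' {v} ⊆ u₁ ∨ π i ⁻¹' {v} ⊆ u₂ := by
      intro v hv
      by_contra hcon
      push_neg at hcon
      obtain ⟨hn1, hn2⟩ := hcon
      have hfsub : π i ⁻¹' {v} ⊆ u₁ ∪ u₂ := fun y hy =>
        hcov (by simpa [Set.mem_preimage, Set.mem_singleton_iff.mp hy] using hv)
      have h1 : (π i ⁻¹' {v} ∩ u₁).Nonempty := by
        rw [Set.not_subset] at hn2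
        obtain ⟨y, hy, hy2⟩ := hn2
        rcases hfsub hy with h | h
        · exact ⟨y, hy, h⟩
        · exact absurd h hy2
      have h2 : (π i ⁻¹' {v} ∩ u₂).Nonempty := by
        rw [Set.not_subset] at hn1
        obtain ⟨y, hy, hy1⟩ := hn1
        rcases hfsub hy with h | h
        · exact absurd h hy1
        · exact ⟨y, hy, h⟩
      obtain ⟨y, hy, hyu⟩ := hfibL i v u₁ u₂ hu₁ hu₂ hfsub h1 h2
      have : y ∈ π i ⁻¹' V ∩ (u₁ ∩ u₂) := by
        refine ⟨?_, hyu⟩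
        simpa [Set.mem_preimage, Set.mem_singleton_iff.mp hy] using hv
      rw [hempty] at this
      exact this
    set W₁ : Set (X i) := V ∩ (π i '' u₁ᶜ)ᶜ with hW₁def
    set W₂ : Set (X i) := V ∩ (π i '' u₂ᶜ)ᶜ with hW₂def
    have hW₁o : IsOpen W₁ := hVo.inter (hclosed _ hu₁.isClosed_compl).isOpen_compl
    have hW₂o : IsOpen W₂ := hVo.inter (hclosed _ hu₂.isClosed_compl).isOpen_compl
    have hmemW : ∀ v ∈ V, (π i ⁻¹' {v} ⊆ u₁ → v ∈ W₁) ∧ (π i ⁻¹' {v} ⊆ u₂ → v ∈ W₂) := by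
      intro v hv
      constructor
      · intro hsub
        refine ⟨hv, ?_⟩
        rintro ⟨y, hy, rfl⟩
        exact hy (hsub rfl)
      · intro hsub
        refine ⟨hv, ?_⟩
        rintro ⟨y, hy, rfl⟩
        exact hy (hsub rfl)
    have hVsub : V ⊆ W₁ ∪ W₂ := by
      intro v hv
      rcases hdichot v hv with h | h
      · exact Or.inl ((hmemW v hv).1 h)
      · exact Or.inr ((hmemW v hv).2 h)
    -- each Wᵢ meets V
    have hfibsub : ∀ y : ↥S, y ∈ π i ⁻¹' V → ∀ w ∈ π i ⁻¹' {π i y}, w ∈ π i ⁻¹' V := by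
      intro y hy w hw
      simpa [Set.mem_preimage, Set.mem_singleton_iff.mp hw] using hy
    have hVW₁ : (V ∩ W₁).Nonempty := by
      obtain ⟨y, hyV, hyu⟩ := hne₁
      have hv : π i y ∈ V := hyV
      rcases hdichot _ hv with h | h
      · exact ⟨π i y, hv, (hmemW _ hv).1 h⟩
      · exfalso
        have : y ∈ π i ⁻¹' V ∩ (u₁ ∩ u₂) := ⟨hyV, hyu, h rfl⟩
        rw [hempty] at this; exact this
    have hVW₂ : (V ∩ W₂).Nonempty := by
      obtain ⟨y, hyV, hyu⟩ := hne₂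
      have hv : π i y ∈ V := hyV
      rcases hdichot _ hv with h | h
      · exfalso
        have : y ∈ π i ⁻¹' V ∩ (u₁ ∩ u₂) := ⟨hyV, h rfl, hyu⟩
        rw [hempty] at this; exact this
      · exact ⟨π i y, hv, (hmemW _ hv).2 h⟩
    obtain ⟨v, hvV, hv₁, hv₂⟩ := hVc W₁ W₂ hW₁o hW₂o hVsub hVW₁ hVW₂
    -- fiber over v lies in both u₁ and u₂, contradiction
    obtain ⟨y, hy⟩ := hthread i v
    have hyfib : y ∈ π i ⁻¹' {v} := by simp [hπdef, hy]
    have hyu₁ : y ∈ u₁ := by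
      by_contra hc
      exact hv₁.2 ⟨y, hc, hy⟩
    have hyu₂ : y ∈ u₂ := by
      by_contra hc
      exact hv₂.2 ⟨y, hc, hy⟩
    have : y ∈ π i ⁻¹' V ∩ (u₁ ∩ u₂) := ⟨by simp [hπdef, hy, hvV], hyu₁, hyu₂⟩
    rw [hempty] at this; exact this
  -- Step 4: conclude local connectedness.
  refine locallyConnectedSpace_iff_subsets_isOpen_isConnected.mpr fun y W hW => ?_
  rcases isEmpty_or_nonempty ι with hι | hι
  · -- degenerate case: the space is a subsingleton
    have hsub : ∀ p : ↥S, p = y := by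
      intro p
      exact Subtype.ext (funext fun k => (hι.elim k))
    refine ⟨Set.univ, fun p _ => ?_, isOpen_univ, Set.mem_univ y, ?_⟩
    · rw [hsub p]; exact mem_of_mem_nhds hW
    · refine ⟨⟨y, Set.mem_univ y⟩, ?_⟩
      have : (Set.univ : Set ↥S).Subsingleton := fun a _ b _ => (hsub a).trans (hsub b).symm
      exact this.isPreconnected
  · -- main case: find a basic open set
    rw [nhds_subtype] at hW
    obtain ⟨W', hW', hWsub⟩ := hW
    rw [nhds_pi, Filter.mem_pi'] at hW'
    obtain ⟨I, t, ht, hts⟩ := hW'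
    obtain ⟨i, hi⟩ := I.exists_le
    have hO : ∀ k, ∃ O : Set (X k), O ⊆ t k ∧ IsOpen O ∧ y.1 k ∈ O := by
      intro k
      rcases mem_nhds_iff.mp (ht k) with ⟨O, hO1, hO2, hO3⟩
      exact ⟨O, hO1, hO2, hO3⟩
    choose O hOsub hOopen hOmem using hO
    set U : Set (X i) := ⋂ k ∈ I, (if h : k ≤ i then f k i h ⁻¹' O k else Set.univ)
      with hUdef
    have hUo : IsOpen U := by
      refine isOpen_biInter_finset fun k _ => ?_
      by_cases h : k ≤ i
      · rw [dif_pos h]; exact (hOopen k).preimage (hcont k i h)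
      · rw [dif_neg h]; exact isOpen_univ
    have hUy : y.1 i ∈ U := by
      refine Set.mem_iInter₂.mpr fun k hk => ?_
      rw [dif_pos (hi k hk)]
      show f k i (hi k hk) (y.1 i) ∈ O k
      rw [y.2 k i (hi k hk)]
      exact hOmem k
    have hUsub : π i ⁻¹' U ⊆ Subtype.val ⁻¹' W' := by
      intro p hp
      refine Set.mem_preimage.mpr (hts ?_)
      intro k hk
      have hk' : k ≤ i := hi k hk
      have := Set.mem_iInter₂.mp hp k hk
      rw [dif_pos hk'] at this
      have : f k i hk' (p.1 i) ∈ O k := this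
      rw [p.2 k i hk'] at this
      exact hOsub k this
    -- shrink U to a connected open neighborhood
    obtain ⟨V, hVU, hVo, hVy, hVconn⟩ :=
      locallyConnectedSpace_iff_subsets_isOpen_isConnected.mp inferInstance (y.1 i) U
        (hUo.mem_nhds hUy)
    refine ⟨π i ⁻¹' V, ?_, hVo.preimage (hπc i), hVy, ?_⟩
    · exact fun p hp => hWsub (hUsub (hVU hp))
    · exact ⟨⟨y, hVy⟩, hpre i V hVo hVconn.isPreconnected⟩
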